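/- Let P be a d-dimensional simplicial reflexive polytope with a centrally symmetric pair of facets F and −F, with vertices of F denoted e_1, …, e_d, and let e_1*, …, e_d* be the dual ℝ-basis of N_ℝ. Let u = η_F and let v be a vertex of P with ⟨u, v⟩ = 0. Writing v = Σ q_i e_i with q_i ∈ ℚ, one has for each i: q_i < 0 if and only if q_i = −1. Moreover, there exist disjoint subsets I, J ⊆ {1,…,d} with |I| = |J| such that v = Σ_{j∈J} e_j − Σ_{i∈I} e_i. -/

import Mathlib

open Pointwise Matrix

/-- Ambient space `ℝ^d`. -/
abbrev E (d : ℕ) := Fin d → ℝ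

/-- A point of the lattice `M ≅ ℤ^d`. -/
def IsLatticePt {d : ℕ} (x : E d) : Prop := ∀ i, ∃ n : ℤ, x i = (n : ℝ)

/-- The standard pairing between `N_ℝ` and `M_ℝ`. -/
def dot {d : ℕ} (x y : E d) : ℝ := ∑ i, x i * y i

/-- The dual (polar) polytope `P* = {x : ⟨x,y⟩ ≥ -1 ∀ y ∈ P}`. -/
def polarDual {d : ℕ} (P : Set (E d)) : Set (E d) := {x | ∀ y ∈ P, -1 ≤ dot x y}

/-- A lattice polytope: convex hull of finitely many lattice points. -/
def IsLatticePolytope {d : ℕ} (P : Set (E d)) : Prop :=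
  ∃ S : Finset (E d), (∀ x ∈ S, IsLatticePt x) ∧ P = convexHull ℝ (S : Set (E d))

/-- A reflexive polytope: a lattice polytope with `0` in its interior whose polar dual is
again a lattice polytope (i.e. the hull of its lattice points). -/
def IsReflexive {d : ℕ} (P : Set (E d)) : Prop :=
  IsLatticePolytope P ∧ 0 ∈ interior P ∧
    polarDual P = convexHull ℝ {x | x ∈ polarDual P ∧ IsLatticePt x}

/-- A facet: a nonempty exposed face of dimension `d - 1`. -/
def IsFacet {d : ℕ} (P F : Set (E d)) : Prop :=
  IsExposed ℝ P F ∧ F.Nonempty ∧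
    Module.finrank ℝ (affineSpan ℝ F).direction = d - 1

/-- Simplicial polytope: every facet is a simplex (hull of `d` affinely independent points). -/
def IsSimplicial {d : ℕ} (P : Set (E d)) : Prop :=
  ∀ F, IsFacet P F → ∃ v : Fin d → E d,
    AffineIndependent ℝ v ∧ F = convexHull ℝ (Set.range v)

/-- Pseudo-symmetric: some facet `F` has `-F` also a facet. -/
def IsPseudoSymmetric {d : ℕ} (P : Set (E d)) : Prop :=
  ∃ F, IsFacet P F ∧ IsFacet P (-F)

/-- Application of an integer matrix to a point of `ℝ^d`. -/
def applyU {d : ℕ} (U : Matrix (Fin d) (Fin d) ℤ) (x : E d) : E d :=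
  (U.map (Int.cast : ℤ → ℝ)) *ᵥ x

/-- Wirth matrix: block form `[[2·Id_f, 0], [C, Id_{d-f}]]` with `C` a `{0,1}`-matrix
each of whose columns has an odd number of `1`'s. -/
def IsWirth {d : ℕ} (A : Matrix (Fin d) (Fin d) ℤ) : Prop :=
  ∃ f : ℕ, f < d ∧
    (∀ i j : Fin d, (i : ℕ) < f → (j : ℕ) < f → A i j = if i = j then 2 else 0) ∧
    (∀ i j : Fin d, (i : ℕ) < f → f ≤ (j : ℕ) → A i j = 0) ∧
    (∀ i j : Fin d, f ≤ (i : ℕ) → (j : ℕ) < f → A i j = 0 ∨ A i j = 1) ∧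
    (∀ i j : Fin d, f ≤ (i : ℕ) → f ≤ (j : ℕ) → A i j = if i = j then 1 else 0) ∧
    (∀ j : Fin d, (j : ℕ) < f →
      Odd (Finset.univ.filter (fun i : Fin d => f ≤ (i : ℕ) ∧ A i j = 1)).card)

namespace KeyAux

variable {d : ℕ}

noncomputable def dotL (u : E d) : E d →ₗ[ℝ] ℝ where
  toFun y := dot u y
  map_add' x y := by simp [dot, mul_add, Finset.sum_add_distrib]
  map_smul' c x := by simp [dot, Finset.mul_sum, mul_left_comm]

@[simp] lemma dotL_apply (u y : E d) : dotL u y = dot u y := rfl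

lemma dot_comm (x y : E d) : dot x y = dot y x := by simp [dot, mul_comm]

lemma dot_add_right (u x y : E d) : dot u (x + y) = dot u x + dot u y :=
  (dotL u).map_add x y

lemma dot_smul_right (u : E d) (c : ℝ) (x : E d) : dot u (c • x) = c * dot u x :=
  (dotL u).map_smul c x

lemma dot_neg_right (u x : E d) : dot u (-x) = -dot u x := by
  simpa using (dotL u).map_neg x

lemma dot_neg_left (u x : E d) : dot (-u) x = -dot u x := by
  rw [dot_comm, dot_neg_right, dot_comm]

lemma dot_sum_right {ι : Type*} (u : E d) (s : Finset ι) (f : ι → E d) :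
    dot u (∑ i ∈ s, f i) = ∑ i ∈ s, dot u (f i) := by
  exact map_sum (dotL u) f s

lemma dot_add_left (u w x : E d) : dot (u + w) x = dot u x + dot w x := by
  rw [dot_comm, dot_add_right, dot_comm x u, dot_comm x w]

lemma dot_smul_left (c : ℝ) (u x : E d) : dot (c • u) x = c * dot u x := by
  rw [dot_comm, dot_smul_right, dot_comm]

lemma dot_sum_left {ι : Type*} (s : Finset ι) (f : ι → E d) (x : E d) :
    dot (∑ i ∈ s, f i) x = ∑ i ∈ s, dot (f i) x := by
  rw [dot_comm, dot_sum_right]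
  exact Finset.sum_congr rfl fun i _ => dot_comm x (f i)

lemma intDot {x y : E d} (hx : IsLatticePt x) (hy : IsLatticePt y) :
    ∃ n : ℤ, dot x y = (n : ℝ) := by
  choose a ha using hx
  choose b hb using hy
  refine ⟨∑ i, a i * b i, ?_⟩
  rw [dot]
  push_cast
  exact Finset.sum_congr rfl fun i _ => by rw [ha i, hb i]

lemma ge_on_hull {A : Set (E d)} {φ : E d →ₗ[ℝ] ℝ} {r : ℝ} (h : ∀ a ∈ A, r ≤ φ a) :
    ∀ x ∈ convexHull ℝ A, r ≤ φ x :=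
  fun _ hx => convexHull_min h (convex_halfSpace_ge φ.isLinear r) hx

lemma le_on_hull {A : Set (E d)} {φ : E d →ₗ[ℝ] ℝ} {r : ℝ} (h : ∀ a ∈ A, φ a ≤ r) :
    ∀ x ∈ convexHull ℝ A, φ x ≤ r :=
  fun _ hx => convexHull_min h (convex_halfSpace_le φ.isLinear r) hx

lemma eq_on_hull {A : Set (E d)} {φ : E d →ₗ[ℝ] ℝ} {r : ℝ} (h : ∀ a ∈ A, φ a = r) :
    ∀ x ∈ convexHull ℝ A, φ x = r :=
  fun _ hx => convexHull_min h (convex_hyperplane φ.isLinear r) hx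

lemma ker_finrank (φ : E d →ₗ[ℝ] ℝ) {x₀ : E d} (h : φ x₀ ≠ 0) :
    Module.finrank ℝ (LinearMap.ker φ) = d - 1 := by
  have hsurj : Function.Surjective φ := fun r =>
    ⟨(r / φ x₀) • x₀, by rw [LinearMap.map_smul, smul_eq_mul, div_mul_cancel₀ _ h]⟩
  have h1 := LinearMap.finrank_range_add_finrank_ker φ
  rw [LinearMap.range_eq_top.2 hsurj] at h1
  rw [finrank_top, Module.finrank_self] at h1
  have h2 : Module.finrank ℝ (E d) = d := Module.finrank_fin_fun ℝ
  omega

lemma linIndep_affineIndep {f : Fin d → E d} (hf : LinearIndependent ℝ f) :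
    AffineIndependent ℝ f := by
  rw [affineIndependent_iff]
  intro s w _ hsum i hi
  classical
  have h := Fintype.linearIndependent_iff.1 hf (fun j => if j ∈ s then w j else 0) ?_ i
  · simpa [hi] using h
  · rw [← hsum]
    simp only [ite_smul, zero_smul]
    rw [Finset.sum_ite_mem, Finset.univ_inter]

lemma mem_hull_of_coords {f : Fin d → E d} {lam : Fin d → ℝ} (h0 : ∀ i, 0 ≤ lam i)
    (h1 : ∑ i, lam i = 1) : ∑ i, lam i • f i ∈ convexHull ℝ (Set.range f) := by
  have := Finset.univ.centerMass_mem_convexHull (w := lam) (z := f)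
    (fun i _ => h0 i) (by rw [h1]; norm_num) (fun i _ => Set.mem_range_self i)
  rwa [Finset.centerMass_eq_of_sum_1 _ _ h1] at this

lemma pinch {ι : Type} {t : Finset ι} {wt : ι → ℝ} {g : ι → ℝ}
    (hw0 : ∀ i ∈ t, 0 ≤ wt i) (hg : ∀ i ∈ t, -1 ≤ g i)
    (hsum1 : ∑ i ∈ t, wt i = 1) (hsum : ∑ i ∈ t, wt i * g i = -1) :
    ∀ i ∈ t, wt i ≠ 0 → g i = -1 := by
  have h0 : ∑ i ∈ t, wt i * (g i + 1) = 0 := by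
    simp only [mul_add, Finset.sum_add_distrib, mul_one, hsum, hsum1]
    ring
  intro i hi hwi
  have := (Finset.sum_eq_zero_iff_of_nonneg
    (fun j hj => mul_nonneg (hw0 j hj) (by linarith [hg j hj]))).1 h0 i hi
  rcases mul_eq_zero.1 this with h | h
  · exact absurd h hwi
  · linarith

section Coords

variable [Nonempty (Fin d)] {e : Fin d → E d}

noncomputable def bas (he : LinearIndependent ℝ e) : Module.Basis (Fin d) ℝ (E d) :=
  basisOfLinearIndependentOfCardEqFinrank he (by simp)

lemma bas_coe (he : LinearIndependent ℝ e) : ⇑(bas he) = e :=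
  coe_basisOfLinearIndependentOfCardEqFinrank he _

lemma coord_apply_e (he : LinearIndependent ℝ e) (i j : Fin d) :
    (bas he).coord j (e i) = if i = j then 1 else 0 := by
  have : e i = bas he i := by rw [bas_coe he]
  rw [this, Module.Basis.coord_apply, Module.Basis.repr_self, Finsupp.single_apply]

lemma coord_sum (he : LinearIndependent ℝ e) (c : Fin d → ℝ) (j : Fin d) :
    (bas he).coord j (∑ i, c i • e i) = c j := by
  rw [map_sum]
  simp only [LinearMap.map_smul, coord_apply_e he, smul_eq_mul, mul_ite, mul_one, mul_zero]
  simp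

lemma sum_coords_eq_self (he : LinearIndependent ℝ e) (x : E d) :
    ∑ j, (bas he).coord j x • e j = x := by
  conv_rhs => rw [← Module.Basis.sum_repr (bas he) x]
  refine Finset.sum_congr rfl fun j _ => ?_
  rw [Module.Basis.coord_apply, bas_coe he]

lemma eq_basis_vec_of_coords (he : LinearIndependent ℝ e) {x : E d} {i : Fin d}
    (h0 : ∀ j, 0 ≤ (bas he).coord j x) (hs : ∑ j, (bas he).coord j x = 1)
    (hi : (bas he).coord i x = 1) : x = e i := by
  classical
  have hz : ∀ j ∈ Finset.univ.erase i, (bas he).coord j x = 0 := by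
    have h1 : ∑ j ∈ Finset.univ.erase i, (bas he).coord j x = 0 := by
      have h2 := Finset.sum_erase_add Finset.univ (fun j => (bas he).coord j x)
        (Finset.mem_univ i)
      linarith [hs, h2, hi]
    intro j hj
    exact (Finset.sum_eq_zero_iff_of_nonneg (fun j _ => h0 j)).1 h1 j hj
  have := sum_coords_eq_self he x
  rw [Finset.sum_eq_single i (fun j _ hj => by
    rw [hz j (Finset.mem_erase.2 ⟨hj, Finset.mem_univ j⟩), zero_smul])
    (fun h => absurd (Finset.mem_univ i) h)] at this
  rw [← this, hi, one_smul]

lemma simplex_extreme (he : LinearIndependent ℝ e) (i : Fin d) :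
    e i ∈ Set.extremePoints ℝ (convexHull ℝ (Set.range e)) := by
  classical
  set b := bas he with hbdef
  have hge : ∀ (j : Fin d), ∀ x ∈ convexHull ℝ (Set.range e), 0 ≤ b.coord j x := by
    intro j
    exact ge_on_hull (by rintro a ⟨l, rfl⟩; rw [coord_apply_e he]; split <;> norm_num)
  have hle : ∀ x ∈ convexHull ℝ (Set.range e), b.coord i x ≤ 1 :=
    le_on_hull (by rintro a ⟨l, rfl⟩; rw [coord_apply_e he]; split <;> norm_num)
  have hsum1 : ∀ x ∈ convexHull ℝ (Set.range e), ∑ j, b.coord j x = 1 := by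
    have := eq_on_hull (A := Set.range e) (φ := ∑ j, b.coord j) (r := 1) ?_
    · intro x hx
      have h2 := this x hx
      rwa [LinearMap.sum_apply] at h2
    · rintro a ⟨l, rfl⟩
      rw [LinearMap.sum_apply]
      simp only [hbdef, coord_apply_e he]
      simp
  refine ⟨subset_convexHull ℝ _ (Set.mem_range_self i), ?_⟩
  intro x₁ hx₁ x₂ hx₂ hseg
  obtain ⟨a, c, ha, hc, hac, hsum⟩ := hseg
  have e1 : a * b.coord i x₁ + c * b.coord i x₂ = 1 := by
    have h := congrArg (b.coord i) hsum
    rw [map_add, LinearMap.map_smul, LinearMap.map_smul, coord_apply_e he, if_pos rfl] at h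
    simpa using h
  have f1 : b.coord i x₁ = 1 := by nlinarith [hle x₁ hx₁, hle x₂ hx₂]
  have f2 : b.coord i x₂ = 1 := by nlinarith [hle x₁ hx₁, hle x₂ hx₂]
  exact eq_basis_vec_of_coords he (fun j => hge j x₁ hx₁) (hsum1 x₁ hx₁) f1

lemma sum_coords_eq_neg_dot (he : LinearIndependent ℝ e) (u : E d)
    (hu : ∀ i, dot u (e i) = -1) (x : E d) :
    ∑ j, (bas he).coord j x = -dot u x := by
  have hL : (∑ j, (bas he).coord j) = -(dotL u) := by
    refine (bas he).ext fun i => ?_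
    rw [LinearMap.sum_apply]
    have hbi : bas he i = e i := by rw [bas_coe he]
    simp only [hbi, coord_apply_e he, LinearMap.neg_apply, dotL_apply, hu i]
    simp
  have := congrArg (fun (f : E d →ₗ[ℝ] ℝ) => f x) hL
  simpa using this

lemma coords_nonneg_of_level {P : Set (E d)} (he : LinearIndependent ℝ e)
    (hext : IsExtreme ℝ P (convexHull ℝ (Set.range e)))
    (u : E d) (hu : ∀ i, dot u (e i) = -1)
    {x : E d} (hxP : x ∈ P) (hxu : dot u x = -1) :
    ∀ j, 0 ≤ (bas he).coord j x := by
  classical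
  set F := convexHull ℝ (Set.range e) with hF
  have hd : 0 < (d : ℝ) := by
    have : 0 < d := Fin.pos_iff_nonempty.2 inferInstance
    exact_mod_cast this
  have hsx : ∑ j, (bas he).coord j x = 1 := by
    rw [sum_coords_eq_neg_dot he u hu, hxu]; norm_num
  set B : ℝ := (Finset.univ.sup' Finset.univ_nonempty fun j => |(bas he).coord j x|) + 1
    with hBdef
  have hBj : ∀ j, |(bas he).coord j x| ≤ B - 1 := fun j => by
    have := Finset.le_sup' (fun j => |(bas he).coord j x|) (Finset.mem_univ j)
    simp only [hBdef]; linarith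
  have hB : 0 < B := by
    have h1 := hBj (Classical.arbitrary (Fin d))
    have h2 := abs_nonneg ((bas he).coord (Classical.arbitrary (Fin d)) x)
    linarith
  set ε : ℝ := 1 / ((d : ℝ) * B) with hεdef
  have hε : 0 < ε := by positivity
  have hεB : ε * B = 1 / d := by
    rw [hεdef]
    field_simp
  set lam : Fin d → ℝ := fun j => (1 + ε) / d - ε * (bas he).coord j x with hlam
  have hlam0 : ∀ j, 0 ≤ lam j := by
    intro j
    have h1 : ε * (bas he).coord j x ≤ ε * (B - 1) :=
      mul_le_mul_of_nonneg_left (le_trans (le_abs_self _) (hBj j)) (le_of_lt hε)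
    have h2 : ε * (B - 1) = 1 / d - ε := by rw [mul_sub, hεB]; ring
    have h3 : (1 + ε) / d = 1 / d + ε / d := by ring
    have h4 : 0 < ε / d := by positivity
    simp only [hlam]
    nlinarith
  have hlamsum : ∑ j, lam j = 1 := by
    simp only [hlam]
    rw [Finset.sum_sub_distrib, ← Finset.mul_sum, hsx, Finset.sum_const, Finset.card_univ,
      Fintype.card_fin, nsmul_eq_mul]
    have hx1 : (d:ℝ) * ((1 + ε)/d) = 1 + ε := by field_simp
    rw [hx1]
    ring
  set z : E d := ∑ j, lam j • e j with hz
  have hzF : z ∈ F := mem_hull_of_coords hlam0 hlamsum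
  set p : E d := ∑ j, ((1 : ℝ) / d) • e j with hp
  have hpF : p ∈ F := mem_hull_of_coords (fun _ => by positivity)
    (by rw [Finset.sum_const, Finset.card_univ, Fintype.card_fin, nsmul_eq_mul,
         mul_one_div, div_self (ne_of_gt hd)])
  set a : ℝ := ε / (1 + ε) with ha
  set c : ℝ := 1 / (1 + ε) with hc
  have h1ε : 0 < 1 + ε := by linarith
  have h1ε' : (1 : ℝ) + ε ≠ 0 := ne_of_gt h1ε
  have hseg : p ∈ openSegment ℝ x z := by
    refine ⟨a, c, by positivity, by positivity, by rw [ha, hc]; field_simp; ring, ?_⟩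
    conv_lhs => rw [← sum_coords_eq_self he x]
    rw [hz, hp, Finset.smul_sum, Finset.smul_sum, ← Finset.sum_add_distrib]
    refine Finset.sum_congr rfl fun j _ => ?_
    rw [smul_smul, smul_smul, ← add_smul]
    congr 1
    simp only [hlam, ha, hc]
    field_simp
    ring
  have hxF : x ∈ F := hext.2 hxP (hext.1 hzF) hpF hseg
  intro j
  exact ge_on_hull (φ := (bas he).coord j)
    (by rintro y ⟨l, rfl⟩; rw [coord_apply_e he]; split <;> norm_num) x hxF

end Coords

lemma upper {P Fneg : Set (E d)} {u : E d} (hexp : IsExposed ℝ P Fneg)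
    (hne : Fneg.Nonempty)
    (hval : ∀ y ∈ Fneg, dot u y = 1)
    (h0 : (0 : E d) ∈ P)
    (hdim : Module.finrank ℝ (affineSpan ℝ Fneg).direction = d - 1) :
    ∀ y ∈ P, dot u y ≤ 1 := by
  obtain ⟨l, hl⟩ := hexp hne
  obtain ⟨p₀, hp₀⟩ := hne
  have hp₀' := hp₀
  rw [hl] at hp₀'
  obtain ⟨hp₀P, hmax⟩ := hp₀'
  have hc0 : 0 ≤ l p₀ := by
    have := hmax 0 h0
    rwa [map_zero] at this
  have hcne : l p₀ ≠ 0 := by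
    intro hc
    have h0F : (0 : E d) ∈ Fneg := by
      rw [hl]
      exact ⟨h0, fun y hy => by rw [map_zero]; linarith [hmax y hy]⟩
    have := hval 0 h0F
    simp [dot] at this
  have hlFc : ∀ x ∈ Fneg, l x = l p₀ := by
    intro x hx
    have hx' := hx
    rw [hl] at hx'
    exact le_antisymm (hmax x hx'.1) (hx'.2 p₀ hp₀P)
  set m : E d →ₗ[ℝ] ℝ := l p₀ • dotL u - (l : E d →ₗ[ℝ] ℝ) with hm
  have hmval : ∀ y, m y = l p₀ * dot u y - l y := by
    intro y
    simp [hm]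
  have hFker : ∀ x ∈ Fneg, m x = 0 := fun x hx => by
    rw [hmval, hval x hx, hlFc x hx]; ring
  have hWm : (affineSpan ℝ Fneg).direction ≤ LinearMap.ker m := by
    rw [direction_affineSpan, vectorSpan_def, Submodule.span_le]
    rintro _ ⟨x, hx, y, hy, rfl⟩
    simp only [SetLike.mem_coe, LinearMap.mem_ker, vsub_eq_sub, map_sub]
    rw [hFker x hx, hFker y hy, sub_zero]
  have hWu : (affineSpan ℝ Fneg).direction ≤ LinearMap.ker (dotL u) := by
    rw [direction_affineSpan, vectorSpan_def, Submodule.span_le]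
    rintro _ ⟨x, hx, y, hy, rfl⟩
    simp only [SetLike.mem_coe, LinearMap.mem_ker, vsub_eq_sub, map_sub, dotL_apply]
    rw [hval x hx, hval y hy, sub_self]
  have hmzero : m = 0 := by
    by_contra hm0
    obtain ⟨x₀, hx₀⟩ : ∃ x₀, m x₀ ≠ 0 := by
      by_contra h
      push_neg at h
      exact hm0 (LinearMap.ext fun y => by rw [h y]; rfl)
    have hker := ker_finrank m hx₀
    have heq : (affineSpan ℝ Fneg).direction = LinearMap.ker m :=
      Submodule.eq_of_le_of_finrank_eq hWm (by rw [hdim, hker])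
    have hp₀K : p₀ ∈ LinearMap.ker m := LinearMap.mem_ker.2 (hFker p₀ hp₀)
    rw [← heq] at hp₀K
    have hzero : dotL u p₀ = 0 := hWu hp₀K
    rw [dotL_apply, hval p₀ hp₀] at hzero
    norm_num at hzero
  intro y hy
  have h1 : l p₀ * dot u y - l y = 0 := by
    have := congrArg (fun f : E d →ₗ[ℝ] ℝ => f y) hmzero
    simp only [LinearMap.zero_apply] at this
    rw [← hmval y, this]
  have hclt : 0 < l p₀ := lt_of_le_of_ne hc0 (Ne.symm hcne)
  have h2 : l y ≤ l p₀ := hmax y hy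
  have h3 : l p₀ * dot u y ≤ l p₀ * 1 := by rw [mul_one]; linarith
  exact le_of_mul_le_mul_left h3 hclt

theorem star {P : Set (E d)} {S : Finset (E d)}
    (hS : ∀ x ∈ S, IsLatticePt x) (hPS : P = convexHull ℝ (S : Set (E d)))
    (hdual : polarDual P = convexHull ℝ {x | x ∈ polarDual P ∧ IsLatticePt x})
    (hsimp : IsSimplicial P)
    {e : Fin d → E d} (he : LinearIndependent ℝ e)
    (hextF : IsExtreme ℝ P (convexHull ℝ (Set.range e)))
    (hextnegF : IsExtreme ℝ P (convexHull ℝ (Set.range (fun i => -e i))))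
    {u v : E d}
    (hu : ∀ i, dot u (e i) = -1) (huP : ∀ y ∈ P, -1 ≤ dot u y)
    (hv : v ∈ Set.extremePoints ℝ P)
    {q : Fin d → ℝ} (hq : v = ∑ i, q i • e i) (hq0 : ∑ i, q i = 0)
    {k : Fin d} (hk : q k < 0) : q k = -1 := by
  classical
  have hnonempty : Nonempty (Fin d) := ⟨k⟩
  have hen : LinearIndependent ℝ (fun i => -e i) := by
    have h := he.units_smul (fun _ => (-1 : ℝˣ))
    convert h using 1
    funext i
    simp [Units.smul_def]
  have hSP : (S : Set (E d)) ⊆ P := by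
    rw [hPS]; exact subset_convexHull ℝ _
  have hvP : v ∈ P := hv.1
  have heP : ∀ i, e i ∈ P := fun i => hextF.1 (subset_convexHull ℝ _ (Set.mem_range_self i))
  have hneP : ∀ i, -e i ∈ P := fun i => hextnegF.1 (subset_convexHull ℝ _ ⟨i, rfl⟩)
  have hlat : ∀ x ∈ Set.extremePoints ℝ P, IsLatticePt x := by
    intro x hx
    rw [hPS] at hx
    exact hS x (by exact_mod_cast extremePoints_convexHull_subset hx)
  have hvlat : IsLatticePt v := hlat v hv
  have heext : ∀ i, e i ∈ Set.extremePoints ℝ P :=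
    fun i => hextF.extremePoints_subset_extremePoints (simplex_extreme he i)
  have hneext : ∀ i, -e i ∈ Set.extremePoints ℝ P :=
    fun i => hextnegF.extremePoints_subset_extremePoints (simplex_extreme hen i)
  have helat : ∀ i, IsLatticePt (e i) := fun i => hlat _ (heext i)
  have hduv : dot u v = 0 := by
    rw [hq, dot_sum_right]
    simp only [dot_smul_right, hu, mul_neg_one]
    rw [Finset.sum_neg_distrib, hq0, neg_zero]
  set φ := (bas he).coord k with hφ
  have hφv : φ v = q k := by rw [hφ, hq, coord_sum he q k]
  have hφe : ∀ j, φ (e j) = if j = k then 1 else 0 := fun j => coord_apply_e he j k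
  set wφ : E d := fun i => φ (fun j => if i = j then 1 else 0) with hwφ
  have hdotwφ : ∀ y, dot wφ y = φ y := by
    intro y
    rw [LinearMap.pi_apply_eq_sum_univ φ y, dot]
    exact Finset.sum_congr rfl fun i _ => by rw [hwφ, smul_eq_mul, mul_comm]
  set Sneg := S.filter (fun s => φ s < 0) with hSneg
  have hSnegne : Sneg.Nonempty := by
    by_contra hcon
    rw [Finset.not_nonempty_iff_eq_empty] at hcon
    have hge : ∀ s ∈ (S : Set (E d)), (0:ℝ) ≤ φ s := by
      intro s hs
      by_contra hlt
      push_neg at hlt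
      have hmem : s ∈ Sneg := Finset.mem_filter.2 ⟨(by exact_mod_cast hs), hlt⟩
      rw [hcon] at hmem
      exact absurd hmem (Finset.notMem_empty s)
    have hge2 := ge_on_hull (φ := φ) hge v (by rw [← hPS]; exact hvP)
    rw [hφv] at hge2
    linarith
  have hterm : ∀ s ∈ Sneg, 0 < (dot u s + 1) / (-φ s) := by
    intro s hs
    obtain ⟨hsS, hsneg⟩ := Finset.mem_filter.1 hs
    have hsP : s ∈ P := hSP hsS
    have h1 : -1 ≤ dot u s := huP s hsP
    have h2 : dot u s ≠ -1 := by
      intro heq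
      have h3 := coords_nonneg_of_level he hextF u hu hsP heq k
      rw [← hφ] at h3
      linarith
    have h4 : 0 < dot u s + 1 := by
      rcases lt_or_eq_of_le h1 with h | h
      · linarith
      · exact absurd h.symm h2
    exact div_pos h4 (by linarith)
  set t₀ := Sneg.inf' hSnegne (fun s => (dot u s + 1) / (-φ s)) with ht₀
  have ht₀pos : 0 < t₀ := by
    rw [ht₀, Finset.lt_inf'_iff]
    exact hterm
  set u' := u + t₀ • wφ with hu'
  have hu'val : ∀ y, dot u' y = dot u y + t₀ * φ y := by
    intro y
    rw [hu', dot_add_left, dot_smul_left, hdotwφ]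
  have hu'P : u' ∈ polarDual P := by
    intro y hy
    rw [hPS] at hy
    refine ge_on_hull (φ := dotL u') ?_ y hy
    intro s hs
    rw [dotL_apply, hu'val]
    rcases lt_or_ge (φ s) 0 with hneg | hpos
    · have hsmem : s ∈ Sneg := Finset.mem_filter.2 ⟨by exact_mod_cast hs, hneg⟩
      have hle := Finset.inf'_le (fun s => (dot u s + 1) / (-φ s)) hsmem
      rw [← ht₀] at hle
      have hφpos : 0 < -φ s := by linarith
      rw [le_div_iff₀ hφpos] at hle
      nlinarith
    · have hus := huP s (hSP (by exact_mod_cast hs))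
      nlinarith [mul_nonneg (le_of_lt ht₀pos) hpos]
  have hu'mem : u' ∈ convexHull ℝ {x | x ∈ polarDual P ∧ IsLatticePt x} := by
    rw [← hdual]; exact hu'P
  rw [convexHull_eq] at hu'mem
  obtain ⟨ι, t, wt, z, hw0, hw1, hz, hcm⟩ := hu'mem
  rw [Finset.centerMass_eq_of_sum_1 _ _ hw1] at hcm
  have hu'ej : ∀ j, j ≠ k → dot u' (e j) = -1 := by
    intro j hj
    rw [hu'val, hu j, hφe j, if_neg hj]
    ring
  have hu'ek : dot u' (e k) = -1 + t₀ := by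
    rw [hu'val, hu k, hφe k, if_pos rfl]
    ring
  have hdotsum : ∀ y : E d, dot u' y = ∑ i ∈ t, wt i * dot (z i) y := by
    intro y
    rw [← hcm, dot_sum_left]
    exact Finset.sum_congr rfl fun i _ => dot_smul_left _ _ _
  have hzP : ∀ i ∈ t, z i ∈ polarDual P := fun i hi => (hz i hi).1
  have hpinch : ∀ i ∈ t, wt i ≠ 0 → ∀ j, j ≠ k → dot (z i) (e j) = -1 := by
    intro i hi hwi j hj
    refine pinch hw0 (fun i' hi' => hzP i' hi' (e j) (heP j)) hw1 ?_ i hi hwi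
    rw [← hdotsum, hu'ej j hj]
  obtain ⟨i₀, hi₀t, hwi₀, hzek⟩ : ∃ i ∈ t, wt i ≠ 0 ∧ -1 < dot (z i) (e k) := by
    by_contra hcon
    push_neg at hcon
    have hle : ∑ i ∈ t, wt i * dot (z i) (e k) ≤ -1 := by
      calc ∑ i ∈ t, wt i * dot (z i) (e k) ≤ ∑ i ∈ t, wt i * (-1) := by
            refine Finset.sum_le_sum fun i hi => ?_
            rcases eq_or_ne (wt i) 0 with h | h
            · rw [h, zero_mul, zero_mul]
            · exact mul_le_mul_of_nonneg_left (hcon i hi h) (hw0 i hi)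
        _ = -1 := by rw [← Finset.sum_mul, hw1]; ring
    rw [← hdotsum, hu'ek] at hle
    linarith
  set w := z i₀ with hwdef
  have hwP : w ∈ polarDual P := hzP i₀ hi₀t
  have hwlat : IsLatticePt w := (hz i₀ hi₀t).2
  have hwej : ∀ j, j ≠ k → dot w (e j) = -1 := hpinch i₀ hi₀t hwi₀
  obtain ⟨n, hn⟩ := intDot hwlat (helat k)
  have hn0 : 0 ≤ n := by
    have h1 : (-1 : ℝ) < (n:ℝ) := by rw [← hn]; exact hzek
    have h2 : (-1 : ℤ) < n := by exact_mod_cast h1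
    omega
  have hdotwv : dot w v = ((n:ℝ) + 1) * q k := by
    rw [hq, dot_sum_right]
    simp only [dot_smul_right]
    have hsplit : ∀ j : Fin d, q j * dot w (e j) = q j * (dot w (e j) + 1) - q j := by
      intro j; ring
    rw [Finset.sum_congr rfl (fun j _ => hsplit j), Finset.sum_sub_distrib, hq0, sub_zero]
    rw [Finset.sum_eq_single k (fun j _ hj => by rw [hwej j hj]; ring)
      (fun h => absurd (Finset.mem_univ k) h)]
    rw [hn]
    ring
  obtain ⟨m, hm⟩ := intDot hwlat hvlat
  have hm1 : m = -1 := by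
    have hge : (-1:ℝ) ≤ (m:ℝ) := by rw [← hm]; exact hwP v hvP
    have hlt : (m:ℝ) < 0 := by
      rw [← hm, hdotwv]
      have hnpos : 0 < (n:ℝ) + 1 := by
        have : (0:ℝ) ≤ (n:ℝ) := by exact_mod_cast hn0
        linarith
      exact mul_neg_of_pos_of_neg hnpos hk
    have h1 : (-1:ℤ) ≤ m := by exact_mod_cast hge
    have h2 : m < 0 := by exact_mod_cast hlt
    omega
  have hqkn : ((n:ℝ) + 1) * q k = -1 := by
    rw [← hdotwv, hm, hm1]
    norm_num
  have hnle : n ≤ 1 := by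
    have h := hwP (-e k) (hneP k)
    rw [dot_neg_right, hn] at h
    have : (n:ℝ) ≤ 1 := by linarith
    exact_mod_cast this
  rcases (by omega : n = 0 ∨ n = 1) with hn01 | hn01
  · rw [hn01] at hqkn
    push_cast at hqkn
    linarith
  · exfalso
    rw [hn01] at hn hqkn
    push_cast at hn hqkn
    have hwek : dot w (e k) = 1 := hn
    have hdotwv' : dot w v = -1 := by
      rw [hdotwv, hn01]
      push_cast
      linarith
    set G := {x ∈ P | dot w x = -1} with hG
    have hvG : v ∈ G := ⟨hvP, hdotwv'⟩
    have hejG : ∀ j, j ≠ k → e j ∈ G := fun j hj => ⟨heP j, hwej j hj⟩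
    have hnekG : -e k ∈ G := ⟨hneP k, by rw [dot_neg_right, hwek]⟩
    have hGsubP : G ⊆ P := fun x hx => hx.1
    have hexpG : IsExposed ℝ P G := by
      intro _
      refine ⟨LinearMap.toContinuousLinearMap (-(dotL w)), ?_⟩
      ext x
      simp only [hG, Set.mem_setOf_eq, LinearMap.coe_toContinuousLinearMap',
        LinearMap.neg_apply, dotL_apply]
      constructor
      · rintro ⟨hxP, hxw⟩
        exact ⟨hxP, fun y hy => by rw [hxw]; linarith [hwP y hy]⟩
      · rintro ⟨hxP, hmax⟩
        refine ⟨hxP, le_antisymm ?_ (hwP x hxP)⟩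
        have h5 := hmax v hvP
        rw [hdotwv'] at h5
        linarith
    set g : Fin d → E d := fun j => if j = k then -e k else e j with hg
    have hglin : LinearIndependent ℝ g := by
      have h := he.units_smul (fun j => if j = k then (-1 : ℝˣ) else 1)
      convert h using 1
      funext j
      by_cases hj : j = k
      · subst hj; simp [hg, Units.smul_def]
      · simp [hg, hj, Units.smul_def]
    have hgaff : AffineIndependent ℝ g := linIndep_affineIndep hglin
    have hgG : ∀ j, g j ∈ G := by
      intro j
      by_cases hj : j = k
      · subst hj
        simp only [hg, if_pos rfl]
        exact hnekG
      · simp only [hg, if_neg hj]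
        exact hejG j hj
    have hd1 : 1 ≤ d := Fin.pos_iff_nonempty.2 inferInstance
    have hdimG : Module.finrank ℝ (affineSpan ℝ G).direction = d - 1 := by
      apply le_antisymm
      · rw [direction_affineSpan, vectorSpan_def]
        have hker : Submodule.span ℝ (G -ᵥ G) ≤ LinearMap.ker (dotL w) := by
          rw [Submodule.span_le]
          rintro _ ⟨x, hx, y, hy, rfl⟩
          simp only [SetLike.mem_coe, LinearMap.mem_ker, vsub_eq_sub, map_sub, dotL_apply]
          rw [hx.2, hy.2, sub_self]
        have hmono := Submodule.finrank_mono hker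
        rwa [ker_finrank (dotL w) (x₀ := e k) (by rw [dotL_apply, hwek]; norm_num)] at hmono
      · have hcard : Fintype.card (Fin d) = (d - 1) + 1 := by
          rw [Fintype.card_fin]; omega
        have hfr := hgaff.finrank_vectorSpan hcard
        rw [direction_affineSpan]
        have hmono : vectorSpan ℝ (Set.range g) ≤ vectorSpan ℝ G :=
          vectorSpan_mono ℝ (Set.range_subset_iff.2 hgG)
        calc d - 1 = Module.finrank ℝ (vectorSpan ℝ (Set.range g)) := hfr.symm
          _ ≤ _ := Submodule.finrank_mono hmono
    obtain ⟨bv, hbvaff, hGconv⟩ := hsimp G ⟨hexpG, ⟨v, hvG⟩, hdimG⟩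
    have hmemrange : ∀ x, x ∈ Set.extremePoints ℝ P → x ∈ G → x ∈ Set.range bv := by
      intro x hx hxG
      have hxext : x ∈ Set.extremePoints ℝ G :=
        ⟨hxG, fun a ha b hb hseg => hx.2 (hGsubP ha) (hGsubP hb) hseg⟩
      rw [hGconv] at hxext
      exact extremePoints_convexHull_subset hxext
    set T : Finset (E d) :=
      insert v (insert (-e k) ((Finset.univ.erase k).image e)) with hT
    have hTsub : T ⊆ Finset.univ.image bv := by
      intro x hx
      have hxr : x ∈ Set.range bv := by
        rw [hT] at hx
        rcases Finset.mem_insert.1 hx with heq | hx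
        · rw [heq]; exact hmemrange v hv hvG
        rcases Finset.mem_insert.1 hx with heq | hx
        · rw [heq]; exact hmemrange _ (hneext k) hnekG
        obtain ⟨j, hj, rfl⟩ := Finset.mem_image.1 hx
        exact hmemrange _ (heext j) (hejG j (Finset.mem_erase.1 hj).1)
      obtain ⟨j, rfl⟩ := hxr
      exact Finset.mem_image.2 ⟨j, Finset.mem_univ j, rfl⟩
    have hcardT : T.card = d + 1 := by
      have hinj : Set.InjOn e ((Finset.univ.erase k) : Finset (Fin d)) :=
        fun a _ b _ hab => he.injective hab
      have hc1 : ((Finset.univ.erase k).image e).card = d - 1 := by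
        rw [Finset.card_image_of_injOn hinj, Finset.card_erase_of_mem (Finset.mem_univ k),
          Finset.card_univ, Fintype.card_fin]
      have hnot1 : -e k ∉ (Finset.univ.erase k).image e := by
        intro hmem
        obtain ⟨j, _, hjeq⟩ := Finset.mem_image.1 hmem
        have h1 : dot u (e j) = -1 := hu j
        rw [hjeq, dot_neg_right, hu k] at h1
        norm_num at h1
      have hnot2 : v ∉ insert (-e k) ((Finset.univ.erase k).image e) := by
        intro hmem
        rcases Finset.mem_insert.1 hmem with heq | hmem
        · have h1 : dot u v = 1 := by rw [heq, dot_neg_right, hu k]; norm_num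
          rw [hduv] at h1
          norm_num at h1
        · obtain ⟨j, _, hjeq⟩ := Finset.mem_image.1 hmem
          have h1 : dot u (e j) = -1 := hu j
          rw [hjeq, hduv] at h1
          norm_num at h1
      rw [hT, Finset.card_insert_of_notMem hnot2, Finset.card_insert_of_notMem hnot1, hc1]
      omega
    have hcard2 : (Finset.univ.image bv).card ≤ d := by
      refine le_trans Finset.card_image_le ?_
      rw [Finset.card_univ, Fintype.card_fin]
    have hfinal := Finset.card_le_card hTsub
    omega

end KeyAux


theorem key_lemma (d : ℕ) (P F : Set (E d)) (e : Fin d → E d) (u v : E d)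
    (hP : IsReflexive P) (hsimp : IsSimplicial P)
    (hF : IsFacet P F) (hFneg : IsFacet P (-F))
    (he : LinearIndependent ℝ e) (hFe : F = convexHull ℝ (Set.range e))
    (hu : ∀ y ∈ F, dot u y = -1) (huP : ∀ y ∈ P, -1 ≤ dot u y)
    (hv : v ∈ Set.extremePoints ℝ P) (hvu : dot u v = 0)
    (q : Fin d → ℝ) (hq : v = ∑ i, q i • e i) :
    (∀ i, q i < 0 ↔ q i = -1) ∧
    ∃ I J : Finset (Fin d), Disjoint I J ∧ I.card = J.card ∧
      v = ∑ j ∈ J, e j - ∑ i ∈ I, e i := by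
  classical
  obtain ⟨⟨S, hS, hPS⟩, h0, hdual⟩ := hP
  have heiF : ∀ i, e i ∈ F := fun i => by
    rw [hFe]; exact subset_convexHull ℝ _ (Set.mem_range_self i)
  have huei : ∀ i, dot u (e i) = -1 := fun i => hu _ (heiF i)
  have hq0 : ∑ i, q i = 0 := by
    have h := hvu
    rw [hq, KeyAux.dot_sum_right] at h
    simp only [KeyAux.dot_smul_right, huei, mul_neg_one] at h
    rw [Finset.sum_neg_distrib] at h
    linarith
  have hrangeneg : Set.range (fun i => -e i) = -Set.range e := by
    ext x
    rw [Set.mem_neg]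
    constructor
    · rintro ⟨i, rfl⟩
      rw [neg_neg]
      exact Set.mem_range_self i
    · rintro ⟨i, hi⟩
      exact ⟨i, by show -e i = x; rw [hi, neg_neg]⟩
  have hnegFconv : -F = convexHull ℝ (Set.range (fun i => -e i)) := by
    rw [hrangeneg, convexHull_neg, hFe]
  have hupper : ∀ y ∈ P, dot u y ≤ 1 := by
    refine KeyAux.upper hFneg.1 hFneg.2.1 ?_ (interior_subset h0) hFneg.2.2
    intro y hy
    rw [Set.mem_neg] at hy
    have h1 := hu _ hy
    rw [KeyAux.dot_neg_right] at h1
    linarith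
  have hextF : IsExtreme ℝ P (convexHull ℝ (Set.range e)) := hFe ▸ hF.1.isExtreme
  have hextnegF : IsExtreme ℝ P (convexHull ℝ (Set.range (fun i => -e i))) :=
    hnegFconv ▸ hFneg.1.isExtreme
  have part1 : ∀ i, q i < 0 → q i = -1 := fun i hi =>
    KeyAux.star hS hPS hdual hsimp he hextF hextnegF huei huP hv hq hq0 hi
  have hen : LinearIndependent ℝ (fun i => -e i) := by
    have h := he.units_smul (fun _ => (-1 : ℝˣ))
    convert h using 1
    funext i
    simp [Units.smul_def]
  have part2 : ∀ i, 0 < q i → q i = 1 := by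
    intro i hi
    have hq' : v = ∑ j, (-q j) • (-e j) := by
      rw [hq]; exact Finset.sum_congr rfl fun j _ => (neg_smul_neg _ _).symm
    have hee : (fun j => -(-e j)) = e := by funext j; rw [neg_neg]
    have hback : IsExtreme ℝ P (convexHull ℝ (Set.range (fun j => -(-e j)))) := by
      rw [hee, ← hFe]; exact hF.1.isExtreme
    have h := KeyAux.star (u := -u) (q := fun j => -q j) (k := i) hS hPS hdual hsimp hen
      hextnegF hback
      (fun j => by rw [KeyAux.dot_neg_left, KeyAux.dot_neg_right, huei j]; ring)
      (fun y hy => by rw [KeyAux.dot_neg_left]; linarith [hupper y hy])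
      hv hq' (by rw [Finset.sum_neg_distrib, hq0, neg_zero])
      (by linarith : -q i < 0)
    have h' : -q i = -1 := h
    linarith
  have tri : ∀ i, q i = -1 ∨ q i = 0 ∨ q i = 1 := fun i => by
    rcases lt_trichotomy (q i) 0 with h | h | h
    · exact Or.inl (part1 i h)
    · exact Or.inr (Or.inl h)
    · exact Or.inr (Or.inr (part2 i h))
  refine ⟨fun i => ⟨part1 i, fun h => by rw [h]; norm_num⟩, ?_⟩
  set I := Finset.univ.filter (fun i => q i = -1) with hI
  set J := Finset.univ.filter (fun i => q i = 1) with hJ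
  have hmemI : ∀ i, i ∈ I ↔ q i = -1 := fun i => by
    rw [hI, Finset.mem_filter]
    exact ⟨fun h => h.2, fun h => ⟨Finset.mem_univ i, h⟩⟩
  have hmemJ : ∀ i, i ∈ J ↔ q i = 1 := fun i => by
    rw [hJ, Finset.mem_filter]
    exact ⟨fun h => h.2, fun h => ⟨Finset.mem_univ i, h⟩⟩
  have hdisj : Disjoint I J := by
    rw [Finset.disjoint_left]
    intro a haI haJ
    have h1 := (hmemI a).1 haI
    have h2 := (hmemJ a).1 haJ
    rw [h1] at h2
    norm_num at h2
  have hqif : ∀ i, q i = (if i ∈ J then (1:ℝ) else 0) - (if i ∈ I then 1 else 0) := by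
    intro i
    rcases tri i with h | h | h
    · rw [if_pos ((hmemI i).2 h), if_neg (fun hmem => by
        have := (hmemJ i).1 hmem; rw [h] at this; norm_num at this), h]
      norm_num
    · rw [if_neg (fun hmem => by
        have := (hmemJ i).1 hmem; rw [h] at this; norm_num at this), if_neg (fun hmem => by
        have := (hmemI i).1 hmem; rw [h] at this; norm_num at this), h]
      norm_num
    · rw [if_pos ((hmemJ i).2 h), if_neg (fun hmem => by
        have := (hmemI i).1 hmem; rw [h] at this; norm_num at this), h]
      norm_num
  have hcard : I.card = J.card := by
    have h1 : (0:ℝ) = (J.card : ℝ) - (I.card : ℝ) := by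
      rw [← hq0, Finset.sum_congr rfl (fun i _ => hqif i), Finset.sum_sub_distrib]
      congr 1
      · rw [Finset.sum_ite_mem, Finset.univ_inter, Finset.sum_const, nsmul_eq_mul, mul_one]
      · rw [Finset.sum_ite_mem, Finset.univ_inter, Finset.sum_const, nsmul_eq_mul, mul_one]
    have h2 : (I.card : ℝ) = (J.card : ℝ) := by linarith
    exact_mod_cast h2
  refine ⟨I, J, hdisj, hcard, ?_⟩
  rw [hq]
  have hterm : ∀ i : Fin d, q i • e i =
      (if i ∈ J then e i else 0) - (if i ∈ I then e i else 0) := by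
    intro i
    rw [hqif i, sub_smul]
    congr 1 <;> split <;> simp
  rw [Finset.sum_congr rfl (fun i _ => hterm i), Finset.sum_sub_distrib]
  congr 1 <;> rw [Finset.sum_ite_mem, Finset.univ_inter]
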